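/- arXiv:1804.07519 — 2 statements merged into one kernel-verified Lean document; each statement's English description precedes it below -/
import Mathlib

section
/- Let Γ be a Coxeter graph with canonical root system Φ. Let α = Σ_{s∈S} λ_s α_s ∈ Φ⁺ be a positive root, let t ∈ S be outside the support of α, and let t₀ ∈ Supp(α) be such that d(t, Supp(α)) = d(t, t₀) (distance in the Coxeter graph, where s,t are adjacent iff m_{s,t} ≥ 3) and λ_{t₀} > 1. Then α ≡ α_t, where ≡ is the equivalence relation on Φ generated by α ≡₁ β ⟺ ⟨α,β⟩ ∉ {0,1,-1}. -/
open Real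

/-- A Coxeter matrix on the set `S`, with `0` representing the label `∞`. -/
structure CoxeterMat (S : Type*) where
  m : S → S → ℕ
  diagonal : ∀ s, m s s = 1
  symmetric : ∀ s t, m s t = m t s
  off_diagonal : ∀ s t, s ≠ t → m s t ≠ 1

namespace CoxeterMat

variable {S : Type*} (M : CoxeterMat S)

/-- The coefficient `⟨α_s, α_t⟩ = -2 cos (π / m_{s,t})`, with value `-2` when `m_{s,t} = ∞`. -/
noncomputable def c (s t : S) : ℝ :=
  if M.m s t = 0 then -2 else -2 * Real.cos (Real.pi / (M.m s t : ℝ))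

/-- The simple root `α_s` in `V = ⊕_{s ∈ S} ℝ α_s`. -/
noncomputable def sroot (s : S) : S →₀ ℝ := Finsupp.single s 1

/-- The canonical bilinear form of the Coxeter graph. -/
noncomputable def bform : (S →₀ ℝ) →ₗ[ℝ] (S →₀ ℝ) →ₗ[ℝ] ℝ :=
  Finsupp.lift _ ℝ S fun s => Finsupp.lift ℝ ℝ S fun t => M.c s t

/-- The simple reflection `σ_s : x ↦ x - ⟨α_s, x⟩ α_s`. -/
noncomputable def sigma (s : S) : (S →₀ ℝ) →ₗ[ℝ] (S →₀ ℝ) :=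
  LinearMap.id - (M.bform (sroot s)).smulRight (sroot s)

/-- The Coxeter group `W`, realized as the subgroup of linear automorphisms of `V`
generated by the simple reflections. -/
noncomputable def Wgrp : Subgroup ((S →₀ ℝ) ≃ₗ[ℝ] (S →₀ ℝ)) :=
  Subgroup.closure {w | ∃ s : S, (w : (S →₀ ℝ) →ₗ[ℝ] (S →₀ ℝ)) = M.sigma s}

/-- The canonical root system `Φ = {w(α_s) | w ∈ W, s ∈ S}`. -/
def Phi : Set (S →₀ ℝ) := {b | ∃ w ∈ M.Wgrp, ∃ s : S, b = w (sroot s)}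

/-- The set of positive roots. -/
def PhiPos : Set (S →₀ ℝ) := {b | b ∈ M.Phi ∧ ∀ s, 0 ≤ b s}

/-- The equivalence relation `≡` on `Φ` generated by `α ≡₁ β ⟺ ⟨α, β⟩ ∉ {0, 1, -1}`. -/
def equivR : (S →₀ ℝ) → (S →₀ ℝ) → Prop :=
  Relation.EqvGen (fun a b => a ∈ M.Phi ∧ b ∈ M.Phi ∧ M.bform a b ∉ ({0, 1, -1} : Set ℝ))

/-- The underlying graph of the Coxeter graph: `s` and `t` are joined iff `m_{s,t} ≥ 3`
(including `m_{s,t} = ∞`). -/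
def graph : SimpleGraph S where
  Adj s t := s ≠ t ∧ M.m s t ≠ 2
  symm := ⟨fun s t h => ⟨h.1.symm, by rw [M.symmetric]; exact h.2⟩⟩
  loopless := ⟨fun s h => h.1 rfl⟩

/-- The action of a permutation of `S` on `V`. -/
noncomputable def permV (g : Equiv.Perm S) : (S →₀ ℝ) ≃ₗ[ℝ] (S →₀ ℝ) :=
  Finsupp.domLCongr g

/-- The set of elements of `W` fixed by the group `G` of symmetries (acting by conjugation
by the corresponding permutations of coordinates). -/
noncomputable def WfixG (G : Subgroup (Equiv.Perm S)) :
    Set ((S →₀ ℝ) ≃ₗ[ℝ] (S →₀ ℝ)) :=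
  {w | w ∈ M.Wgrp ∧ ∀ g ∈ G, permV g * w = w * permV g}

/-- Construct a simply laced Coxeter matrix from an adjacency relation. -/
noncomputable def ofAdj (A : S → S → Prop) (hs : ∀ s t, A s t → A t s)
    (hi : ∀ s, ¬ A s s) : CoxeterMat S where
  m s t := open Classical in if s = t then 1 else if A s t then 3 else 2
  diagonal s := by simp
  symmetric s t := by
    classical
    by_cases h : s = t
    · subst h; rfl
    · have h' : t ≠ s := Ne.symm h
      simp only [if_neg h, if_neg h']
      by_cases hA : A s t
      · rw [if_pos hA, if_pos (hs s t hA)]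
      · rw [if_neg hA, if_neg (fun h2 => hA (hs t s h2))]
  off_diagonal s t h := by
    classical
    simp only [if_neg h]
    split <;> norm_num

/-- Isomorphism of Coxeter graphs. -/
def Iso {T : Type*} (M : CoxeterMat S) (N : CoxeterMat T) : Prop :=
  ∃ e : S ≃ T, ∀ s t, N.m (e s) (e t) = M.m s t

/-- The full Coxeter subgraph spanned by `Y ⊆ S`. -/
def restrict (Y : Set S) : CoxeterMat Y where
  m s t := M.m s t
  diagonal s := M.diagonal s
  symmetric s t := M.symmetric s t
  off_diagonal s t h := M.off_diagonal s t (fun hh => h (Subtype.ext hh))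

end CoxeterMat

open CoxeterMat

/-- The Coxeter graph `A_n`: a path with `n` vertices. -/
noncomputable def pathA (n : ℕ) : CoxeterMat (Fin n) :=
  ofAdj (fun i j => i.val + 1 = j.val ∨ j.val + 1 = i.val)
    (fun _ _ h => h.symm)
    (fun s h => by rcases h with h | h <;> omega)

/-- The Coxeter graph `D_n`: a path `0 — 1 — ⋯ — (n-2)` together with an extra vertex `n-1`
joined to `n-3`. -/
noncomputable def Dmat (n : ℕ) : CoxeterMat (Fin n) :=
  ofAdj (fun i j => i ≠ j ∧
      (((i.val + 1 = j.val ∧ j.val ≤ n - 2) ∨ (i.val + 2 = j.val ∧ j.val = n - 1)) ∨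
       ((j.val + 1 = i.val ∧ i.val ≤ n - 2) ∨ (j.val + 2 = i.val ∧ i.val = n - 1))))
    (fun _ _ h => ⟨h.1.symm, h.2.symm⟩)
    (fun s h => h.1 rfl)

/-- Adjacency relation determined by a list of edges. -/
def listAdj {n : ℕ} (L : List (Fin n × Fin n)) (i j : Fin n) : Prop :=
  (i, j) ∈ L ∨ (j, i) ∈ L

instance {n : ℕ} (L : List (Fin n × Fin n)) (i j : Fin n) : Decidable (listAdj L i j) := by
  unfold listAdj; infer_instance

/-- The Coxeter graph `E₆`. -/
noncomputable def E6mat : CoxeterMat (Fin 6) :=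
  ofAdj (listAdj [(0,2),(2,3),(3,4),(4,5),(1,3)])
    (fun _ _ h => h.symm) (by decide)

/-- The Coxeter graph `E₇`. -/
noncomputable def E7mat : CoxeterMat (Fin 7) :=
  ofAdj (listAdj [(0,2),(2,3),(3,4),(4,5),(5,6),(1,3)])
    (fun _ _ h => h.symm) (by decide)

/-- The Coxeter graph `E₈`. -/
noncomputable def E8mat : CoxeterMat (Fin 8) :=
  ofAdj (listAdj [(0,2),(2,3),(3,4),(4,5),(5,6),(6,7),(1,3)])
    (fun _ _ h => h.symm) (by decide)

/-- The Coxeter graph `A_∞`: the one-sided infinite path. -/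
noncomputable def Ainf : CoxeterMat ℕ :=
  ofAdj (fun i j => i + 1 = j ∨ j + 1 = i)
    (fun _ _ h => h.symm)
    (fun s h => by omega)

/-- The Coxeter graph `_∞A_∞`: the two-sided infinite path. -/
noncomputable def ZAinf : CoxeterMat ℤ :=
  ofAdj (fun i j => i + 1 = j ∨ j + 1 = i)
    (fun _ _ h => h.symm)
    (fun s h => by omega)

/-- The Coxeter graph `D_∞`: vertices `0, 1, 2, 3, …` with `0` and `1` joined to `2` and a
path `2 — 3 — 4 — ⋯`. -/
noncomputable def Dinf : CoxeterMat ℕ :=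
  ofAdj (fun i j => i ≠ j ∧
      (((i = 0 ∧ j = 2) ∨ (i = 1 ∧ j = 2) ∨ (i + 1 = j ∧ 2 ≤ i)) ∨
       ((j = 0 ∧ i = 2) ∨ (j = 1 ∧ i = 2) ∨ (j + 1 = i ∧ 2 ≤ j))))
    (fun _ _ h => ⟨h.1.symm, h.2.symm⟩)
    (fun s h => h.1 rfl)

/-- The affine Coxeter graph `Ã_n`: a cycle with `n + 1` vertices. -/
noncomputable def affA (n : ℕ) : CoxeterMat (ZMod (n + 1)) :=
  ofAdj (fun i j => i ≠ j ∧ (i + 1 = j ∨ j + 1 = i))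
    (fun _ _ h => ⟨h.1.symm, h.2.symm⟩)
    (fun s h => h.1 rfl)

/-- The affine Coxeter graph `D̃_n` (on `n + 1` vertices, Bourbaki numbering): `0` and `1`
joined to `2`, a path `2 — 3 — ⋯ — (n-1)`, and `n` joined to `n-2`. -/
noncomputable def affD (n : ℕ) : CoxeterMat (Fin (n + 1)) :=
  ofAdj (fun i j => i ≠ j ∧
      (((i.val = 0 ∧ j.val = 2) ∨ (i.val = 1 ∧ j.val = 2) ∨
        (i.val + 1 = j.val ∧ 2 ≤ i.val ∧ i.val ≤ n - 2) ∨
        (i.val = n - 2 ∧ j.val = n)) ∨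
       ((j.val = 0 ∧ i.val = 2) ∨ (j.val = 1 ∧ i.val = 2) ∨
        (j.val + 1 = i.val ∧ 2 ≤ j.val ∧ j.val ≤ n - 2) ∨
        (j.val = n - 2 ∧ i.val = n))))
    (fun _ _ h => ⟨h.1.symm, h.2.symm⟩)
    (fun s h => h.1 rfl)

/-- The affine Coxeter graph `Ẽ₆` (Bourbaki numbering, affine vertex `0`). -/
noncomputable def affE6 : CoxeterMat (Fin 7) :=
  ofAdj (listAdj [(1,3),(3,4),(4,5),(5,6),(2,4),(0,2)])
    (fun _ _ h => h.symm) (by decide)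

/-- The affine Coxeter graph `Ẽ₇` (Bourbaki numbering, affine vertex `0`). -/
noncomputable def affE7 : CoxeterMat (Fin 8) :=
  ofAdj (listAdj [(0,1),(1,3),(3,4),(4,5),(5,6),(6,7),(2,4)])
    (fun _ _ h => h.symm) (by decide)

/-- The affine Coxeter graph `Ẽ₈` (Bourbaki numbering, affine vertex `0`). -/
noncomputable def affE8 : CoxeterMat (Fin 9) :=
  ofAdj (listAdj [(1,3),(3,4),(4,5),(5,6),(6,7),(7,8),(2,4),(0,8)])
    (fun _ _ h => h.symm) (by decide)

namespace CoxeterMat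
variable {S : Type*} {M : CoxeterMat S}

-- helper lemmas

lemma c_symm (s t : S) : M.c s t = M.c t s := by unfold c; rw [M.symmetric]

lemma c_self (s : S) : M.c s s = 2 := by
  unfold c; rw [M.diagonal]; norm_num

lemma two_le_m {s t : S} (h : s ≠ t) (h0 : M.m s t ≠ 0) : 2 ≤ M.m s t := by
  rcases Nat.lt_or_ge (M.m s t) 2 with h2 | h2
  · have := M.off_diagonal s t h; omega
  · exact h2

lemma c_nonpos {s t : S} (h : s ≠ t) : M.c s t ≤ 0 := by
  unfold c
  split
  · norm_num
  · rename_i h0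
    have hm : 2 ≤ M.m s t := two_le_m h h0
    have hpi := Real.pi_pos
    have hm' : (2:ℝ) ≤ (M.m s t : ℝ) := by exact_mod_cast hm
    have hcos : 0 ≤ Real.cos (Real.pi / (M.m s t : ℝ)) := by
      apply Real.cos_nonneg_of_mem_Icc
      constructor
      · have : 0 ≤ Real.pi / (M.m s t : ℝ) := by positivity
        linarith
      · rw [div_le_div_iff₀ (by linarith) (by norm_num)]
        nlinarith
    linarith

lemma c_le_neg_one {s t : S} (h : M.graph.Adj s t) : M.c s t ≤ -1 := by
  unfold c
  split
  · norm_num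
  · rename_i h0
    have hm : 2 ≤ M.m s t := two_le_m h.1 h0
    have hm3 : 3 ≤ M.m s t := by
      rcases Nat.lt_or_ge (M.m s t) 3 with h2 | h2
      · interval_cases h3 : M.m s t <;> simp_all [graph]
      · exact h2
    have hpi := Real.pi_pos
    have hm' : (3:ℝ) ≤ (M.m s t : ℝ) := by exact_mod_cast hm3
    have hcos : Real.cos (Real.pi / (M.m s t : ℝ)) ≥ 1/2 := by
      rw [← Real.cos_pi_div_three]
      apply Real.cos_le_cos_of_nonneg_of_le_pi
      · positivity
      · rw [div_le_iff₀ (by positivity)]; nlinarith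
      · rw [div_le_div_iff₀ (by linarith) (by norm_num)]
        nlinarith
    linarith


lemma bform_apply_sroot (a : S →₀ ℝ) (u : S) :
    M.bform a (sroot u) = a.sum fun s x => x * M.c s u := by
  simp only [bform, sroot, Finsupp.lift_apply, Finsupp.sum, LinearMap.coe_sum,
    Finset.sum_apply, LinearMap.smul_apply]
  apply Finset.sum_congr rfl
  intro s _
  simp [Finsupp.support_single_ne_zero u (one_ne_zero)]

lemma bform_sroot_apply (s : S) (b : S →₀ ℝ) :
    M.bform (sroot s) b = b.sum fun u y => y * M.c s u := by
  simp only [bform, sroot, Finsupp.lift_apply]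
  rw [Finsupp.sum_single_index (by simp)]
  simp [Finsupp.lift_apply, smul_eq_mul]

lemma bform_sroot_sroot (s u : S) : M.bform (sroot s) (sroot u) = M.c s u := by
  rw [bform_sroot_apply]
  unfold sroot
  rw [Finsupp.sum_single_index (by simp)]
  simp

lemma bform_comm_sroot (a : S →₀ ℝ) (u : S) :
    M.bform (sroot u) a = M.bform a (sroot u) := by
  rw [bform_sroot_apply, bform_apply_sroot]
  apply Finsupp.sum_congr
  intro s _
  rw [c_symm]

lemma sigma_apply (s : S) (x : S →₀ ℝ) :
    M.sigma s x = x - (M.bform (sroot s) x) • sroot s := by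
  simp [sigma]

lemma sigma_sigma (s : S) (x : S →₀ ℝ) : M.sigma s (M.sigma s x) = x := by
  rw [sigma_apply, sigma_apply, map_sub, map_smul, bform_sroot_sroot, c_self,
    smul_eq_mul]
  have : M.bform (sroot s) x - M.bform (sroot s) x * 2 = -(M.bform (sroot s) x) := by ring
  rw [this, neg_smul, sub_neg_eq_add, sub_add_cancel]

variable (M) in
noncomputable def sigmaE (s : S) : (S →₀ ℝ) ≃ₗ[ℝ] (S →₀ ℝ) :=
  { M.sigma s with
    invFun := M.sigma s
    left_inv := sigma_sigma s
    right_inv := sigma_sigma s }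

lemma sigmaE_mem (s : S) : M.sigmaE s ∈ M.Wgrp :=
  Subgroup.subset_closure ⟨s, rfl⟩

lemma sroot_mem_phi (s : S) : sroot s ∈ M.Phi :=
  ⟨1, one_mem _, s, rfl⟩

lemma sigma_mem_phi {a : S →₀ ℝ} (s : S) (ha : a ∈ M.Phi) : M.sigma s a ∈ M.Phi := by
  obtain ⟨w, hw, u, hu⟩ := ha
  exact ⟨M.sigmaE s * w, mul_mem (sigmaE_mem s) hw, u, by rw [hu]; rfl⟩

lemma bform_lt {a : S →₀ ℝ} (hpos : ∀ s, 0 ≤ a s) {u t₀ : S} (hu : u ∉ a.support)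
    (ht₀ : t₀ ∈ a.support) (hadj : M.graph.Adj t₀ u) (hl : 1 < a t₀) :
    M.bform a (sroot u) < -1 := by
  classical
  rw [bform_apply_sroot, Finsupp.sum]
  rw [← Finset.add_sum_erase _ _ ht₀]
  have h1 : a t₀ * M.c t₀ u ≤ -(a t₀) := by
    have := c_le_neg_one (M := M) hadj
    nlinarith [hpos t₀]
  have h2 : ∑ s ∈ a.support.erase t₀, a s * M.c s u ≤ 0 := by
    apply Finset.sum_nonpos
    intro s hs
    have hsu : s ≠ u := fun h => hu (h ▸ Finset.mem_of_mem_erase hs)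
    exact mul_nonpos_of_nonneg_of_nonpos (hpos s) (c_nonpos hsu)
  linarith

lemma notin_set_of_lt {x : ℝ} (hx : x < -1) : x ∉ ({0, 1, -1} : Set ℝ) := by
  intro hmem
  simp only [Set.mem_insert_iff, Set.mem_singleton_iff] at hmem
  rcases hmem with h | h | h <;> linarith

lemma notin_set_of_gt {x : ℝ} (hx : 1 < x) : x ∉ ({0, 1, -1} : Set ℝ) := by
  intro hmem
  simp only [Set.mem_insert_iff, Set.mem_singleton_iff] at hmem
  rcases hmem with h | h | h <;> linarith

lemma aux (hconn : M.graph.Connected) (t : S) :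
    ∀ n (a : S →₀ ℝ), a ∈ M.PhiPos → ∀ t₀, t ∉ a.support → t₀ ∈ a.support →
      (∀ r ∈ a.support, M.graph.dist t t₀ ≤ M.graph.dist t r) → 1 < a t₀ →
      M.graph.dist t t₀ = n → M.equivR a (sroot t) := by
  intro n
  induction n using Nat.strong_induction_on with
  | _ n ih =>
  intro a ha t₀ ht ht₀ hd hl hdist
  have htne : t ≠ t₀ := fun h => ht (h ▸ ht₀)
  have hn1 : 1 ≤ n := by
    rw [← hdist]; exact hconn.pos_dist_of_ne htne
  obtain ⟨p, hp⟩ := hconn.exists_walk_length_eq_dist t₀ t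
  rw [SimpleGraph.dist_comm, hdist] at hp
  cases p with
  | nil => simp at hp; omega
  | cons hadj q =>
    rename_i t₁
    rw [SimpleGraph.Walk.length_cons] at hp
    have hqlen : q.length = n - 1 := by omega
    have hdt1 : M.graph.dist t t₁ = n - 1 := by
      have hle : M.graph.dist t t₁ ≤ n - 1 := by
        have h2 := SimpleGraph.dist_le q.reverse
        rwa [SimpleGraph.Walk.length_reverse, hqlen] at h2
      have htri := hconn.dist_triangle (u := t) (v := t₁) (w := t₀)
      have h1 : M.graph.dist t₁ t₀ ≤ 1 := by
        have := SimpleGraph.dist_le (hadj.symm.toWalk)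
        simpa using this
      omega
    have ht1supp : t₁ ∉ a.support := by
      intro hmem
      have := hd t₁ hmem
      omega
    set c := M.bform a (sroot t₁) with hc_def
    have hc : c < -1 := bform_lt ha.2 ht1supp ht₀ hadj hl
    have hrel1 : M.equivR a (sroot t₁) :=
      Relation.EqvGen.rel _ _ ⟨ha.1, sroot_mem_phi t₁, notin_set_of_lt hc⟩
    by_cases het : t₁ = t
    · subst het
      exact Relation.EqvGen.rel _ _ ⟨ha.1, sroot_mem_phi t₁, notin_set_of_lt hc⟩
    · -- inductive step
      set b := M.sigma t₁ a with hb_def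
      have hb_eq : b = a - c • sroot t₁ := by
        rw [hb_def, sigma_apply, bform_comm_sroot, hc_def]
      have hat1 : a t₁ = 0 := Finsupp.notMem_support_iff.mp ht1supp
      have hbr : ∀ r, r ≠ t₁ → b r = a r := by
        intro r hr
        rw [hb_eq]
        simp [sroot, Finsupp.single_apply, Ne.symm hr]
      have hbt1 : b t₁ = -c := by
        rw [hb_eq]
        simp [sroot, hat1]
      have hbpos : ∀ s, 0 ≤ b s := by
        intro s
        by_cases hs : s = t₁
        · rw [hs, hbt1]; linarith
        · rw [hbr s hs]; exact ha.2 s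
      have hbphi : b ∈ M.PhiPos := ⟨sigma_mem_phi t₁ ha.1, hbpos⟩
      have htb : t ∉ b.support := by
        rw [Finsupp.notMem_support_iff, hbr t (fun h => het h.symm)]
        exact Finsupp.notMem_support_iff.mp ht
      have ht1b : t₁ ∈ b.support := by
        rw [Finsupp.mem_support_iff, hbt1]
        intro h
        have : c = 0 := by linarith [neg_eq_zero.mp h]
        linarith
      have hd' : ∀ r ∈ b.support, M.graph.dist t t₁ ≤ M.graph.dist t r := by
        intro r hr
        by_cases hrt : r = t₁
        · rw [hrt]
        · have : a r ≠ 0 := by rw [← hbr r hrt]; exact Finsupp.mem_support_iff.mp hr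
          have := hd r (Finsupp.mem_support_iff.mpr this)
          omega
      have hl' : 1 < b t₁ := by rw [hbt1]; linarith
      have hih := ih (n - 1) (by omega) b hbphi t₁ htb ht1b hd' hl' hdt1
      have hbf2 : M.bform (sroot t₁) b = -c := by
        rw [hb_eq, map_sub, map_smul, bform_sroot_sroot, c_self, bform_comm_sroot,
          ← hc_def, smul_eq_mul]
        ring
      have hrel2 : M.equivR (sroot t₁) b :=
        Relation.EqvGen.rel _ _ ⟨sroot_mem_phi t₁, hbphi.1,
          hbf2 ▸ notin_set_of_gt (by linarith)⟩
      exact Relation.EqvGen.trans _ _ _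
        (Relation.EqvGen.trans _ _ _ hrel1 hrel2) hih


end CoxeterMat

/-- Let `α = Σ λ_s α_s` be a positive root, `t ∉ Supp(α)`, and `t₀ ∈ Supp(α)` realizing
the graph distance from `t` to `Supp(α)`, with `λ_{t₀} > 1`. Then `α ≡ α_t`. -/
theorem stmt6 {S : Type*} (M : CoxeterMat S) (hconn : M.graph.Connected)
    (a : S →₀ ℝ) (ha : a ∈ M.PhiPos) (t t₀ : S)
    (ht : t ∉ a.support) (ht₀ : t₀ ∈ a.support)
    (hd : ∀ r ∈ a.support, M.graph.dist t t₀ ≤ M.graph.dist t r)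
    (hl : 1 < a t₀) :
    M.equivR a (sroot t) :=
  CoxeterMat.aux hconn t (M.graph.dist t t₀) a ha t₀ ht ht₀ hd hl rfl
end

section
/- Let Γ be a Coxeter graph, G a group of symmetries of Γ with all orbits of S finite, Φ the canonical root system of Γ, and ⟨·,·⟩ the canonical bilinear form. Suppose every root α ∈ Φ can be written w(α_s) with w ∈ W^G and s ∈ S, and suppose that whenever t = g(s) ≠ s for s,t ∈ S and g ∈ G one has m_{s,t} = 2. Then for any α, β ∈ Φ and g ∈ G with β = g(α) ≠ α, one has ⟨α, β⟩ = 0. -/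
open Real

open CoxeterMat

namespace CoxeterMat

section Aux

variable {S : Type*} (M : CoxeterMat S)

lemma bform_single (s t : S) : M.bform (sroot s) (sroot t) = M.c s t := by
  simp [CoxeterMat.bform, CoxeterMat.sroot]

lemma bform_symm (x y : S →₀ ℝ) : M.bform x y = M.bform y x := by
  have : M.bform = M.bform.flip := by
    refine Finsupp.lhom_ext fun s r => ?_
    refine LinearMap.ext fun z => ?_
    induction z using Finsupp.induction_linear with
    | zero => simp
    | add a b ha hb => simp_all
    | single t q =>
      have hst : M.c s t = M.c t s := by
        unfold CoxeterMat.c; rw [M.symmetric]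
      simp only [LinearMap.flip_apply]
      have h1 : (Finsupp.single s r) = r • sroot s := by
        simp [CoxeterMat.sroot, Finsupp.smul_single]
      have h2 : (Finsupp.single t q) = q • sroot t := by
        simp [CoxeterMat.sroot, Finsupp.smul_single]
      rw [h1, h2]
      simp only [map_smul, LinearMap.smul_apply, smul_eq_mul]
      rw [M.bform_single, M.bform_single, hst]
      ring
  conv_lhs => rw [this]
  rfl

lemma bform_self_sroot (s : S) : M.bform (sroot s) (sroot s) = 2 := by
  rw [M.bform_single]
  unfold CoxeterMat.c
  rw [M.diagonal]
  norm_num [Real.cos_pi]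

lemma sigma_inv (s : S) (x y : S →₀ ℝ) :
    M.bform (M.sigma s x) (M.sigma s y) = M.bform x y := by
  simp only [CoxeterMat.sigma, LinearMap.sub_apply, LinearMap.id_apply,
    LinearMap.smulRight_apply, map_sub, map_smul, LinearMap.sub_apply,
    LinearMap.smul_apply, smul_eq_mul]
  rw [M.bform_self_sroot, M.bform_symm x (sroot s)]
  ring

lemma w_inv {w : (S →₀ ℝ) ≃ₗ[ℝ] (S →₀ ℝ)} (hw : w ∈ M.Wgrp) (x y : S →₀ ℝ) :
    M.bform (w x) (w y) = M.bform x y := by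
  revert x y
  induction hw using Subgroup.closure_induction with
  | mem w hw =>
    intro x y
    obtain ⟨s, hs⟩ := hw
    have hx : w x = M.sigma s x := by rw [← hs]; rfl
    have hy : w y = M.sigma s y := by rw [← hs]; rfl
    rw [hx, hy, M.sigma_inv]
  | one => intro x y; simp
  | mul u v hu hv ihu ihv =>
    intro x y
    have : ∀ z, (u * v) z = u (v z) := fun z => rfl
    rw [this, this, ihu, ihv]
  | inv u hu ihu =>
    intro x y
    have h := ihu (u⁻¹ x) (u⁻¹ y)
    have hx : u (u⁻¹ x) = x := u.apply_symm_apply x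
    have hy : u (u⁻¹ y) = y := u.apply_symm_apply y
    rw [hx, hy] at h
    exact h.symm

lemma permV_sroot (g : Equiv.Perm S) (s : S) :
    permV g (sroot s : S →₀ ℝ) = sroot (g s) := by
  simp [CoxeterMat.permV, CoxeterMat.sroot]

end Aux

end CoxeterMat

/-- Let `G` be a group of symmetries of `Γ` with all orbits of `S` finite, such that every
root is of the form `w(α_s)` with `w ∈ W^G`, and such that `m_{s,t} = 2` whenever
`t = g(s) ≠ s`. Then for all roots `α, β ∈ Φ` and `g ∈ G` with `β = g(α) ≠ α`, one has
`⟨α, β⟩ = 0`. -/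
theorem stmt13 {S : Type*} (M : CoxeterMat S) (G : Subgroup (Equiv.Perm S))
    (hG : ∀ g ∈ G, ∀ s t, M.m (g s) (g t) = M.m s t)
    (hfin : ∀ s : S, {t | ∃ g ∈ G, g s = t}.Finite)
    (hall : ∀ a ∈ M.Phi, ∃ w ∈ M.WfixG G, ∃ s : S, a = w (sroot s))
    (h2 : ∀ s t : S, ∀ g ∈ G, g s = t → t ≠ s → M.m s t = 2)
    (a b : S →₀ ℝ) (ha : a ∈ M.Phi) (hb : b ∈ M.Phi)
    (g : Equiv.Perm S) (hg : g ∈ G) (hba : b = permV g a) (hne : b ≠ a) :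
    M.bform a b = 0 := by
  obtain ⟨w, ⟨hwW, hwcomm⟩, s, rfl⟩ := hall a ha
  have hbw : b = w (sroot (g s)) := by
    rw [hba, ← permV_sroot g s]
    have := hwcomm g hg
    have h1 : (permV g * w) (sroot s) = (w * permV g) (sroot s) := by rw [this]
    exact h1
  have hgs : g s ≠ s := by
    intro h
    apply hne
    rw [hbw, h]
  rw [hbw, M.w_inv hwW, M.bform_single]
  have hm : M.m s (g s) = 2 := h2 s (g s) g hg rfl hgs
  unfold CoxeterMat.c
  rw [hm]
  norm_num [Real.cos_pi_div_two]
end
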